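/- Let V be an infinite-dimensional vector space over a field F of characteristic ≠ 2 and let U be an ideal of the Lie algebra gl(V) such that the associative ideal of End_F(V) generated by [U,U] equals I_α for some infinite cardinal α ≤ dim_F V. Then [I_α, End_F(V)] ⊆ U ⊆ F·Id_V + I_α. -/

import Mathlib

open Cardinal

variable (F V : Type*) [Field F] [AddCommGroup V] [Module F V]

/-- The ideal `I_α` of endomorphisms of rank `< α` (for an infinite cardinal `α`),
as a subspace of `End F V`. -/
def rankIdeal (α : Cardinal) (hα : ℵ₀ ≤ α) : Submodule F (Module.End F V) where
  carrier := {φ | LinearMap.rank φ < α}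
  zero_mem' := by
    simp only [Set.mem_setOf_eq, LinearMap.rank_zero]
    exact lt_of_lt_of_le aleph0_pos hα
  add_mem' := fun hf hg =>
    lt_of_le_of_lt (LinearMap.rank_add_le _ _) (Cardinal.add_lt_of_lt hα hf hg)
  smul_mem' := by
    intro c f hf
    have h1 : LinearMap.range (c • f) ≤ LinearMap.range f := by
      rintro x ⟨y, rfl⟩
      exact ⟨c • y, by simp⟩
    exact lt_of_le_of_lt (Submodule.rank_mono h1) hf

section AuxLemmas

variable {F V}

set_option maxHeartbeats 4000000 in
lemma herstein_key {U : Submodule F (Module.End F V)}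
    (hU : ∀ u ∈ U, ∀ x : Module.End F V, u * x - x * u ∈ U)
    {u v : Module.End F V} (hu : u ∈ U) (hv : v ∈ U)
    (a b c : Module.End F V) :
    (a*(u*v - v*u)*b)*c - c*(a*(u*v - v*u)*b) ∈ U := by
  have H : (a*(u*v - v*u)*b)*c - c*(a*(u*v - v*u)*b) =
      ((((u*(v) - (v)*u)*(a) - (a)*(u*(v) - (v)*u))*(c) - (c)*((u*(v) - (v)*u)*(a) - (a)*(u*(v) - (v)*u)))*(b) - (b)*(((u*(v) - (v)*u)*(a) - (a)*(u*(v) - (v)*u))*(c) - (c)*((u*(v) - (v)*u)*(a) - (a)*(u*(v) - (v)*u)))) + (((u*(v) - (v)*u)*(a) - (a)*(u*(v) - (v)*u))*(b*c) - (b*c)*((u*(v) - (v)*u)*(a) - (a)*(u*(v) - (v)*u))) + ((((u*(v) - (v)*u)*(b) - (b)*(u*(v) - (v)*u))*(a) - (a)*((u*(v) - (v)*u)*(b) - (b)*(u*(v) - (v)*u)))*(c) - (c)*(((u*(v) - (v)*u)*(b) - (b)*(u*(v) - (v)*u))*(a) - (a)*((u*(v) - (v)*u)*(b) - (b)*(u*(v)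 - (v)*u)))) + ((((u*(v) - (v)*u)*(b) - (b)*(u*(v) - (v)*u))*(c) - (c)*((u*(v) - (v)*u)*(b) - (b)*(u*(v) - (v)*u)))*(a) - (a)*(((u*(v) - (v)*u)*(b) - (b)*(u*(v) - (v)*u))*(c) - (c)*((u*(v) - (v)*u)*(b) - (b)*(u*(v) - (v)*u)))) + (((u*(v) - (v)*u)*(b) - (b)*(u*(v) - (v)*u))*(a*c) - (a*c)*((u*(v) - (v)*u)*(b) - (b)*(u*(v) - (v)*u))) - ((((u*(v) - (v)*u)*(c) - (c)*(u*(v) - (v)*u))*(b) - (b)*((u*(v) - (v)*u)*(c) - (c)*(u*(v) - (v)*u)))*(a) - (a)*(((u*(v) - (v)*u)*(c) - (c)*(u*(v) - (v)*u))*(b) - (b)*((u*(v) - (v)*u)*(c) - (c)*(u*(v) - (v)*u)))) - (((u*(v) - (v)*u)*(c) - (c)*(u*(v) - (v)*u))*(a*b) - (a*b)*((u*(v) - (v)*u)*(c) - (c)*(u*(v) - (v)*u))) + (((u*(v) - (v)*u)*(a*b) - (a*b)*(u*(v) - (v)*u))*(c) - (c)*((u*(v) - (v)*u)*(a*b) -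 (a*b)*(u*(v) - (v)*u))) - ((((u*(a) - (a)*u)*(v) - (v)*(u*(a) - (a)*u))*(b) - (b)*((u*(a) - (a)*u)*(v) - (v)*(u*(a) - (a)*u)))*(c) - (c)*(((u*(a) - (a)*u)*(v) - (v)*(u*(a) - (a)*u))*(b) - (b)*((u*(a) - (a)*u)*(v) - (v)*(u*(a) - (a)*u)))) - ((((u*(a) - (a)*u)*(v) - (v)*(u*(a) - (a)*u))*(b) - (b)*((u*(a) - (a)*u)*(v) - (v)*(u*(a) - (a)*u)))*(c) - (c)*(((u*(a) - (a)*u)*(v) - (v)*(u*(a) - (a)*u))*(b) - (b)*((u*(a) - (a)*u)*(v) - (v)*(u*(a) - (a)*u)))) - ((((u*(a) - (a)*u)*(v) - (v)*(u*(a) - (a)*u))*(b) - (b)*((u*(a) - (a)*u)*(v) - (v)*(u*(a) - (a)*u)))*(c) - (c)*(((u*(a) - (a)*u)*(v) - (v)*(u*(a) - (a)*u))*(b) - (b)*((u*(a) - (a)*u)*(v) - (v)*(u*(a) - (a)*u)))) + ((((u*(a) - (a)*u)*(v) - (v)*(u*(a) - (a)*u))*(c) - (c)*((u*(a) - (a)*u)*(v)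 - (v)*(u*(a) - (a)*u)))*(b) - (b)*(((u*(a) - (a)*u)*(v) - (v)*(u*(a) - (a)*u))*(c) - (c)*((u*(a) - (a)*u)*(v) - (v)*(u*(a) - (a)*u)))) - (((u*(a) - (a)*u)*(v) - (v)*(u*(a) - (a)*u))*(b*c) - (b*c)*((u*(a) - (a)*u)*(v) - (v)*(u*(a) - (a)*u))) + ((((u*(a) - (a)*u)*(b) - (b)*(u*(a) - (a)*u))*(v) - (v)*((u*(a) - (a)*u)*(b) - (b)*(u*(a) - (a)*u)))*(c) - (c)*(((u*(a) - (a)*u)*(b) - (b)*(u*(a) - (a)*u))*(v) - (v)*((u*(a) - (a)*u)*(b) - (b)*(u*(a) - (a)*u)))) + ((((u*(a) - (a)*u)*(b) - (b)*(u*(a) - (a)*u))*(c) - (c)*((u*(a) - (a)*u)*(b) - (b)*(u*(a) - (a)*u)))*(v) - (v)*(((u*(a) - (a)*u)*(b) - (b)*(u*(a) - (a)*u))*(c) - (c)*((u*(a) - (a)*u)*(b) - (b)*(u*(a) - (a)*u)))) + ((((u*(a) - (a)*u)*(b) - (b)*(u*(a) - (a)*u))*(c) - (c)*((u*(a) - (a)*u)*(b)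 - (b)*(u*(a) - (a)*u)))*(v) - (v)*(((u*(a) - (a)*u)*(b) - (b)*(u*(a) - (a)*u))*(c) - (c)*((u*(a) - (a)*u)*(b) - (b)*(u*(a) - (a)*u)))) + (((u*(a) - (a)*u)*(b) - (b)*(u*(a) - (a)*u))*(v*c) - (v*c)*((u*(a) - (a)*u)*(b) - (b)*(u*(a) - (a)*u))) + (((u*(a) - (a)*u)*(b) - (b)*(u*(a) - (a)*u))*(v*c) - (v*c)*((u*(a) - (a)*u)*(b) - (b)*(u*(a) - (a)*u))) - ((((u*(a) - (a)*u)*(c) - (c)*(u*(a) - (a)*u))*(v) - (v)*((u*(a) - (a)*u)*(c) - (c)*(u*(a) - (a)*u)))*(b) - (b)*(((u*(a) - (a)*u)*(c) - (c)*(u*(a) - (a)*u))*(v) - (v)*((u*(a) - (a)*u)*(c) - (c)*(u*(a) - (a)*u)))) - ((((u*(a) - (a)*u)*(c) - (c)*(u*(a) - (a)*u))*(b) - (b)*((u*(a) - (a)*u)*(c) - (c)*(u*(a) - (a)*u)))*(v) - (v)*(((u*(a) - (a)*u)*(c) - (c)*(u*(a) - (a)*u))*(b) - (b)*((u*(a)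 - (a)*u)*(c) - (c)*(u*(a) - (a)*u)))) + (((u*(a) - (a)*u)*(c) - (c)*(u*(a) - (a)*u))*(v*b) - (v*b)*((u*(a) - (a)*u)*(c) - (c)*(u*(a) - (a)*u))) + (((u*(a) - (a)*u)*(c) - (c)*(u*(a) - (a)*u))*(v*b) - (v*b)*((u*(a) - (a)*u)*(c) - (c)*(u*(a) - (a)*u))) + (((u*(a) - (a)*u)*(v*b) - (v*b)*(u*(a) - (a)*u))*(c) - (c)*((u*(a) - (a)*u)*(v*b) - (v*b)*(u*(a) - (a)*u))) - (((u*(a) - (a)*u)*(v*c) - (v*c)*(u*(a) - (a)*u))*(b) - (b)*((u*(a) - (a)*u)*(v*c) - (v*c)*(u*(a) - (a)*u))) + ((u*(a) - (a)*u)*(v*b*c) - (v*b*c)*(u*(a) - (a)*u)) - ((((u*(b) - (b)*u)*(v) - (v)*(u*(b) - (b)*u))*(a) - (a)*((u*(b) - (b)*u)*(v) - (v)*(u*(b) - (b)*u)))*(c) - (c)*(((u*(b) - (b)*u)*(v) - (v)*(u*(b) - (b)*u))*(a) - (a)*((u*(b) - (b)*u)*(v) - (v)*(u*(b) - (b)*u))))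 - ((((u*(b) - (b)*u)*(v) - (v)*(u*(b) - (b)*u))*(a) - (a)*((u*(b) - (b)*u)*(v) - (v)*(u*(b) - (b)*u)))*(c) - (c)*(((u*(b) - (b)*u)*(v) - (v)*(u*(b) - (b)*u))*(a) - (a)*((u*(b) - (b)*u)*(v) - (v)*(u*(b) - (b)*u)))) - ((((u*(b) - (b)*u)*(v) - (v)*(u*(b) - (b)*u))*(a) - (a)*((u*(b) - (b)*u)*(v) - (v)*(u*(b) - (b)*u)))*(c) - (c)*(((u*(b) - (b)*u)*(v) - (v)*(u*(b) - (b)*u))*(a) - (a)*((u*(b) - (b)*u)*(v) - (v)*(u*(b) - (b)*u)))) + ((((u*(b) - (b)*u)*(v) - (v)*(u*(b) - (b)*u))*(c) - (c)*((u*(b) - (b)*u)*(v) - (v)*(u*(b) - (b)*u)))*(a) - (a)*(((u*(b) - (b)*u)*(v) - (v)*(u*(b) - (b)*u))*(c) - (c)*((u*(b) - (b)*u)*(v) - (v)*(u*(b) - (b)*u)))) - (((u*(b) - (b)*u)*(v) - (v)*(u*(b) - (b)*u))*(a*c) - (a*c)*((u*(b) - (b)*u)*(v) - (v)*(u*(b)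 - (b)*u))) + ((((u*(b) - (b)*u)*(a) - (a)*(u*(b) - (b)*u))*(v) - (v)*((u*(b) - (b)*u)*(a) - (a)*(u*(b) - (b)*u)))*(c) - (c)*(((u*(b) - (b)*u)*(a) - (a)*(u*(b) - (b)*u))*(v) - (v)*((u*(b) - (b)*u)*(a) - (a)*(u*(b) - (b)*u)))) - (((u*(b) - (b)*u)*(a) - (a)*(u*(b) - (b)*u))*(v*c) - (v*c)*((u*(b) - (b)*u)*(a) - (a)*(u*(b) - (b)*u))) - ((((u*(b) - (b)*u)*(c) - (c)*(u*(b) - (b)*u))*(v) - (v)*((u*(b) - (b)*u)*(c) - (c)*(u*(b) - (b)*u)))*(a) - (a)*(((u*(b) - (b)*u)*(c) - (c)*(u*(b) - (b)*u))*(v) - (v)*((u*(b) - (b)*u)*(c) - (c)*(u*(b) - (b)*u)))) - ((((u*(b) - (b)*u)*(c) - (c)*(u*(b) - (b)*u))*(a) - (a)*((u*(b) - (b)*u)*(c) - (c)*(u*(b) - (b)*u)))*(v) - (v)*(((u*(b) - (b)*u)*(c) - (c)*(u*(b) - (b)*u))*(a) - (a)*((u*(b) - (b)*u)*(c) - (c)*(u*(b)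 - (b)*u)))) + (((u*(b) - (b)*u)*(c) - (c)*(u*(b) - (b)*u))*(v*a) - (v*a)*((u*(b) - (b)*u)*(c) - (c)*(u*(b) - (b)*u))) + (((u*(b) - (b)*u)*(c) - (c)*(u*(b) - (b)*u))*(v*a) - (v*a)*((u*(b) - (b)*u)*(c) - (c)*(u*(b) - (b)*u))) + (((u*(b) - (b)*u)*(v*a) - (v*a)*(u*(b) - (b)*u))*(c) - (c)*((u*(b) - (b)*u)*(v*a) - (v*a)*(u*(b) - (b)*u))) + (((u*(b) - (b)*u)*(v*a) - (v*a)*(u*(b) - (b)*u))*(c) - (c)*((u*(b) - (b)*u)*(v*a) - (v*a)*(u*(b) - (b)*u))) - (((u*(b) - (b)*u)*(v*c) - (v*c)*(u*(b) - (b)*u))*(a) - (a)*((u*(b) - (b)*u)*(v*c) - (v*c)*(u*(b) - (b)*u))) + ((u*(b) - (b)*u)*(v*a*c) - (v*a*c)*(u*(b) - (b)*u)) - ((((u*(c) - (c)*u)*(v) - (v)*(u*(c) - (c)*u))*(a) - (a)*((u*(c) - (c)*u)*(v) - (v)*(u*(c) - (c)*u)))*(b) - (b)*(((u*(c) - (c)*u)*(v)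 - (v)*(u*(c) - (c)*u))*(a) - (a)*((u*(c) - (c)*u)*(v) - (v)*(u*(c) - (c)*u)))) + ((((u*(c) - (c)*u)*(v) - (v)*(u*(c) - (c)*u))*(b) - (b)*((u*(c) - (c)*u)*(v) - (v)*(u*(c) - (c)*u)))*(a) - (a)*(((u*(c) - (c)*u)*(v) - (v)*(u*(c) - (c)*u))*(b) - (b)*((u*(c) - (c)*u)*(v) - (v)*(u*(c) - (c)*u)))) + (((u*(c) - (c)*u)*(v) - (v)*(u*(c) - (c)*u))*(a*b) - (a*b)*((u*(c) - (c)*u)*(v) - (v)*(u*(c) - (c)*u))) + ((((u*(c) - (c)*u)*(a) - (a)*(u*(c) - (c)*u))*(b) - (b)*((u*(c) - (c)*u)*(a) - (a)*(u*(c) - (c)*u)))*(v) - (v)*(((u*(c) - (c)*u)*(a) - (a)*(u*(c) - (c)*u))*(b) - (b)*((u*(c) - (c)*u)*(a) - (a)*(u*(c) - (c)*u)))) - (((u*(c) - (c)*u)*(a) - (a)*(u*(c) - (c)*u))*(v*b) - (v*b)*((u*(c) - (c)*u)*(a) - (a)*(u*(c) - (c)*u))) - (((u*(c) - (c)*u)*(b)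 - (b)*(u*(c) - (c)*u))*(v*a) - (v*a)*((u*(c) - (c)*u)*(b) - (b)*(u*(c) - (c)*u))) - (((u*(v*a) - (v*a)*u)*(b) - (b)*(u*(v*a) - (v*a)*u))*(c) - (c)*((u*(v*a) - (v*a)*u)*(b) - (b)*(u*(v*a) - (v*a)*u))) - (((u*(v*a) - (v*a)*u)*(b) - (b)*(u*(v*a) - (v*a)*u))*(c) - (c)*((u*(v*a) - (v*a)*u)*(b) - (b)*(u*(v*a) - (v*a)*u))) - (((u*(v*a) - (v*a)*u)*(b) - (b)*(u*(v*a) - (v*a)*u))*(c) - (c)*((u*(v*a) - (v*a)*u)*(b) - (b)*(u*(v*a) - (v*a)*u))) + (((u*(v*a) - (v*a)*u)*(c) - (c)*(u*(v*a) - (v*a)*u))*(b) - (b)*((u*(v*a) - (v*a)*u)*(c) - (c)*(u*(v*a) - (v*a)*u))) - ((u*(v*a) - (v*a)*u)*(b*c) - (b*c)*(u*(v*a) - (v*a)*u)) - (((u*(v*b) - (v*b)*u)*(a) - (a)*(u*(v*b) - (v*b)*u))*(c) - (c)*((u*(v*b) - (v*b)*u)*(a) - (a)*(u*(v*b) - (v*b)*u)))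 - (((u*(v*b) - (v*b)*u)*(a) - (a)*(u*(v*b) - (v*b)*u))*(c) - (c)*((u*(v*b) - (v*b)*u)*(a) - (a)*(u*(v*b) - (v*b)*u))) - (((u*(v*b) - (v*b)*u)*(a) - (a)*(u*(v*b) - (v*b)*u))*(c) - (c)*((u*(v*b) - (v*b)*u)*(a) - (a)*(u*(v*b) - (v*b)*u))) + (((u*(v*b) - (v*b)*u)*(c) - (c)*(u*(v*b) - (v*b)*u))*(a) - (a)*((u*(v*b) - (v*b)*u)*(c) - (c)*(u*(v*b) - (v*b)*u))) - ((u*(v*b) - (v*b)*u)*(a*c) - (a*c)*(u*(v*b) - (v*b)*u)) - (((u*(v*c) - (v*c)*u)*(a) - (a)*(u*(v*c) - (v*c)*u))*(b) - (b)*((u*(v*c) - (v*c)*u)*(a) - (a)*(u*(v*c) - (v*c)*u))) + (((u*(v*c) - (v*c)*u)*(b) - (b)*(u*(v*c) - (v*c)*u))*(a) - (a)*((u*(v*c) - (v*c)*u)*(b) - (b)*(u*(v*c) - (v*c)*u))) + ((u*(v*c) - (v*c)*u)*(a*b) - (a*b)*(u*(v*c) - (v*c)*u)) - (((u*(a*b)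 - (a*b)*u)*(c) - (c)*(u*(a*b) - (a*b)*u))*(v) - (v)*((u*(a*b) - (a*b)*u)*(c) - (c)*(u*(a*b) - (a*b)*u))) - (((u*(a*b) - (a*b)*u)*(c) - (c)*(u*(a*b) - (a*b)*u))*(v) - (v)*((u*(a*b) - (a*b)*u)*(c) - (c)*(u*(a*b) - (a*b)*u))) - ((u*(a*b) - (a*b)*u)*(v*c) - (v*c)*(u*(a*b) - (a*b)*u)) - ((u*(a*b) - (a*b)*u)*(v*c) - (v*c)*(u*(a*b) - (a*b)*u)) + ((u*(v*a*b) - (v*a*b)*u)*(c) - (c)*(u*(v*a*b) - (v*a*b)*u)) + (u*(v*a*b*c) - (v*a*b*c)*u) - (u*(v*a*c*b) - (v*a*c*b)*u) - (u*(v*a*c*b) - (v*a*c*b)*u) + (u*(v*b*a*c) - (v*b*a*c)*u) + (u*(v*b*a*c) - (v*b*a*c)*u) - (u*(v*b*c*a) - (v*b*c*a)*u) - (u*(v*b*c*a) - (v*b*c*a)*u) + (u*(v*c*a*b) - (v*c*a*b)*u) + ((v*(a) - (a)*v)*(u*b*c) - (u*b*c)*(v*(a) - (a)*v)) + (((v*(b)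 - (b)*v)*(a) - (a)*(v*(b) - (b)*v))*(u*c) - (u*c)*((v*(b) - (b)*v)*(a) - (a)*(v*(b) - (b)*v))) - (((v*(b) - (b)*v)*(u*a) - (u*a)*(v*(b) - (b)*v))*(c) - (c)*((v*(b) - (b)*v)*(u*a) - (u*a)*(v*(b) - (b)*v))) + ((v*(b) - (b)*v)*(u*a*c) - (u*a*c)*(v*(b) - (b)*v)) - ((v*(u*a) - (u*a)*v)*(b*c) - (b*c)*(v*(u*a) - (u*a)*v)) - ((v*(u*b) - (u*b)*v)*(a*c) - (a*c)*(v*(u*b) - (u*b)*v)) := by noncomm_ring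
  rw [H]
  exact (sub_mem (sub_mem (add_mem (sub_mem (add_mem (add_mem (add_mem (sub_mem (sub_mem (add_mem (add_mem (sub_mem (sub_mem (add_mem (add_mem (sub_mem (sub_mem (sub_mem (sub_mem (add_mem (add_mem (sub_mem (sub_mem (add_mem (sub_mem (sub_mem (sub_mem (sub_mem (add_mem (sub_mem (sub_mem (sub_mem (sub_mem (sub_mem (add_mem (add_mem (add_mem (sub_mem (add_mem (sub_mem (add_mem (add_mem (add_mem (add_mem (sub_mem (sub_mem (sub_mem (add_mem (sub_mem (add_mem (sub_mem (sub_mem (sub_mem (add_mem (sub_mem (add_mem (add_mem (add_mem (sub_mem (sub_mem (add_mem (add_mem (add_mem (add_mem (add_mem (sub_mem (add_mem (sub_mem (sub_mem (sub_mem (add_mem (sub_mem (sub_mem (add_mem (add_mem (add_mem (add_mem (hU _ (hU _ (hU _ (hU _ hu (v)) (a)) (c)) (b)) (hU _ (hU _ (hU _ hu (v)) (a)) (b*c))) (hU _ (hU _ (hU _ (hU _ hu (v)) (b)) (a)) (c))) (hU _ (hU _ (hU _ (hU _ hu (v)) (b)) (c)) (a))) (hU _ (hU _ (hU _ hu (v))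 (b)) (a*c))) (hU _ (hU _ (hU _ (hU _ hu (v)) (c)) (b)) (a))) (hU _ (hU _ (hU _ hu (v)) (c)) (a*b))) (hU _ (hU _ (hU _ hu (v)) (a*b)) (c))) (hU _ (hU _ (hU _ (hU _ hu (a)) (v)) (b)) (c))) (hU _ (hU _ (hU _ (hU _ hu (a)) (v)) (b)) (c))) (hU _ (hU _ (hU _ (hU _ hu (a)) (v)) (b)) (c))) (hU _ (hU _ (hU _ (hU _ hu (a)) (v)) (c)) (b))) (hU _ (hU _ (hU _ hu (a)) (v)) (b*c))) (hU _ (hU _ (hU _ (hU _ hu (a)) (b)) (v)) (c))) (hU _ (hU _ (hU _ (hU _ hu (a)) (b)) (c)) (v))) (hU _ (hU _ (hU _ (hU _ hu (a)) (b)) (c)) (v))) (hU _ (hU _ (hU _ hu (a)) (b)) (v*c))) (hU _ (hU _ (hU _ hu (a)) (b)) (v*c))) (hU _ (hU _ (hU _ (hU _ hu (a)) (c)) (v)) (b))) (hU _ (hU _ (hU _ (hU _ hu (a)) (c)) (b)) (v))) (hU _ (hU _ (hU _ hu (a)) (c)) (v*b))) (hU _ (hU _ (hU _ hu (a)) (c))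 (v*b))) (hU _ (hU _ (hU _ hu (a)) (v*b)) (c))) (hU _ (hU _ (hU _ hu (a)) (v*c)) (b))) (hU _ (hU _ hu (a)) (v*b*c))) (hU _ (hU _ (hU _ (hU _ hu (b)) (v)) (a)) (c))) (hU _ (hU _ (hU _ (hU _ hu (b)) (v)) (a)) (c))) (hU _ (hU _ (hU _ (hU _ hu (b)) (v)) (a)) (c))) (hU _ (hU _ (hU _ (hU _ hu (b)) (v)) (c)) (a))) (hU _ (hU _ (hU _ hu (b)) (v)) (a*c))) (hU _ (hU _ (hU _ (hU _ hu (b)) (a)) (v)) (c))) (hU _ (hU _ (hU _ hu (b)) (a)) (v*c))) (hU _ (hU _ (hU _ (hU _ hu (b)) (c)) (v)) (a))) (hU _ (hU _ (hU _ (hU _ hu (b)) (c)) (a)) (v))) (hU _ (hU _ (hU _ hu (b)) (c)) (v*a))) (hU _ (hU _ (hU _ hu (b)) (c)) (v*a))) (hU _ (hU _ (hU _ hu (b)) (v*a)) (c))) (hU _ (hU _ (hU _ hu (b)) (v*a)) (c))) (hU _ (hU _ (hU _ hu (b)) (v*c)) (a))) (hU _ (hU _ hu (b)) (v*a*c)))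 (hU _ (hU _ (hU _ (hU _ hu (c)) (v)) (a)) (b))) (hU _ (hU _ (hU _ (hU _ hu (c)) (v)) (b)) (a))) (hU _ (hU _ (hU _ hu (c)) (v)) (a*b))) (hU _ (hU _ (hU _ (hU _ hu (c)) (a)) (b)) (v))) (hU _ (hU _ (hU _ hu (c)) (a)) (v*b))) (hU _ (hU _ (hU _ hu (c)) (b)) (v*a))) (hU _ (hU _ (hU _ hu (v*a)) (b)) (c))) (hU _ (hU _ (hU _ hu (v*a)) (b)) (c))) (hU _ (hU _ (hU _ hu (v*a)) (b)) (c))) (hU _ (hU _ (hU _ hu (v*a)) (c)) (b))) (hU _ (hU _ hu (v*a)) (b*c))) (hU _ (hU _ (hU _ hu (v*b)) (a)) (c))) (hU _ (hU _ (hU _ hu (v*b)) (a)) (c))) (hU _ (hU _ (hU _ hu (v*b)) (a)) (c))) (hU _ (hU _ (hU _ hu (v*b)) (c)) (a))) (hU _ (hU _ hu (v*b)) (a*c))) (hU _ (hU _ (hU _ hu (v*c)) (a)) (b))) (hU _ (hU _ (hU _ hu (v*c)) (b)) (a))) (hU _ (hU _ hu (v*c)) (a*b))) (hU _ (hU _ (hU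 _ hu (a*b)) (c)) (v))) (hU _ (hU _ (hU _ hu (a*b)) (c)) (v))) (hU _ (hU _ hu (a*b)) (v*c))) (hU _ (hU _ hu (a*b)) (v*c))) (hU _ (hU _ hu (v*a*b)) (c))) (hU _ hu (v*a*b*c))) (hU _ hu (v*a*c*b))) (hU _ hu (v*a*c*b))) (hU _ hu (v*b*a*c))) (hU _ hu (v*b*a*c))) (hU _ hu (v*b*c*a))) (hU _ hu (v*b*c*a))) (hU _ hu (v*c*a*b))) (hU _ (hU _ hv (a)) (u*b*c))) (hU _ (hU _ (hU _ hv (b)) (a)) (u*c))) (hU _ (hU _ (hU _ hv (b)) (u*a)) (c))) (hU _ (hU _ hv (b)) (u*a*c))) (hU _ (hU _ hv (u*a)) (b*c))) (hU _ (hU _ hv (u*b)) (a*c)))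


lemma prime_aux {α : Cardinal} (c : Module.End F V)
    (hc : ∀ b : Module.End F V, LinearMap.rank (c*b*c) < α) : LinearMap.rank c < α := by
  by_contra h
  push_neg at h
  obtain ⟨ι, B⟩ := Module.Free.exists_basis (R := F) (M := LinearMap.range c)
  have hcard : α ≤ #ι := by rw [B.mk_eq_rank'']; exact h
  set w : ι → V := fun i => ((B i : LinearMap.range c) : V) with hw
  have hwi : LinearIndependent F w :=
    B.linearIndependent.map' (LinearMap.range c).subtype (Submodule.ker_subtype _)
  set s : Set V := Set.range w with hsdef
  have hs : LinearIndepOn F id s := (linearIndepOn_id_range_iff hwi.injective).2 hwi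
  set t := hs.extend (Set.subset_univ s) with ht
  set Bv := Module.Basis.extend hs with hBv
  classical
  set g : t → V := fun x => if hx : (x : V) ∈ LinearMap.range c then hx.choose else 0 with hg
  set b := Bv.constr (S := F) g with hb
  have hmem : ∀ i, (w i) ∈ LinearMap.range c := fun i => (B i).2
  have hst : s ⊆ t := hs.subset_extend _
  have hbw : ∀ i, c (b (w i)) = w i := by
    intro i
    have h1 : w i = Bv ⟨w i, hst (Set.mem_range_self i)⟩ :=
      (Module.Basis.extend_apply_self hs ⟨w i, hst (Set.mem_range_self i)⟩).symm
    have h2 : b (w i) = g ⟨w i, hst (Set.mem_range_self i)⟩ := by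
      conv_lhs => rw [h1]
      exact Bv.constr_basis (S := F) g _
    rw [h2, hg]
    simp only [dif_pos (hmem i)]
    exact (hmem i).choose_spec
  have hsub : s ⊆ Set.range (c*b*c) := by
    rintro x ⟨i, rfl⟩
    exact ⟨(hmem i).choose, by simp only [Module.End.mul_apply, (hmem i).choose_spec, hbw]⟩
  have hles : α ≤ LinearMap.rank (c*b*c) := by
    calc α ≤ #ι := hcard
    _ = #s := (Cardinal.mk_range_eq w hwi.injective).symm
    _ = Module.rank F (Submodule.span F s) := (rank_span_set hs).symm
    _ ≤ Module.rank F (LinearMap.range (c*b*c)) := by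
        apply Submodule.rank_mono
        rw [Submodule.span_le]
        intro x hx
        exact LinearMap.mem_range.2 (by rcases hsub hx with ⟨y, hy⟩; exact ⟨y, hy⟩)
  exact absurd (hc b) (not_lt.2 hles)


lemma central_aux {α : Cardinal} (hα : ℵ₀ ≤ α) (hα' : α ≤ Module.rank F V)
    (a : Module.End F V)
    (ha : ∀ x : Module.End F V, LinearMap.rank (a*x - x*a) < α) :
    ∃ lam : F, LinearMap.rank (a - lam • 1) < α := by
  classical
  set Q : Set V → Prop := fun s =>
    LinearIndepOn F id (s ∪ a '' s) ∧ Set.InjOn a s ∧ (s ∩ a '' s) = ∅ with hQ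
  -- Step 1 : no Q-set has cardinality ≥ α
  have hbig : ∀ s : Set V, Q s → #s < α := by
    intro s hQs
    by_contra hge
    push_neg at hge
    obtain ⟨hli, hinj, hdisj⟩ := hQs
    set t := hli.extend (Set.subset_univ _) with htdef
    set Bv := Module.Basis.extend hli with hBv
    set g : t → V := fun z =>
      if hz : (z : V) ∈ a '' s then hz.choose else 0 with hg
    set x := Bv.constr (S := F) g with hx
    have hst : (s ∪ a '' s) ⊆ t := hli.subset_extend _
    have hxv : ∀ v ∈ s, x v = 0 := by
      intro v hv
      have h1 : v = Bv ⟨v, hst (Set.mem_union_left _ hv)⟩ :=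
        (Module.Basis.extend_apply_self hli ⟨v, hst (Set.mem_union_left _ hv)⟩).symm
      have h2 : x v = g ⟨v, hst (Set.mem_union_left _ hv)⟩ := by
        conv_lhs => rw [h1]
        exact Bv.constr_basis (S := F) g _
      rw [h2, hg]
      have : v ∉ a '' s := fun hmem => (Set.eq_empty_iff_forall_notMem.1 hdisj v) ⟨hv, hmem⟩
      simp only [dif_neg this]
    have hxav : ∀ v ∈ s, x (a v) = v := by
      intro v hv
      have hmem : a v ∈ a '' s := ⟨v, hv, rfl⟩
      have h1 : a v = Bv ⟨a v, hst (Set.mem_union_right _ hmem)⟩ :=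
        (Module.Basis.extend_apply_self hli ⟨a v, hst (Set.mem_union_right _ hmem)⟩).symm
      have h2 : x (a v) = g ⟨a v, hst (Set.mem_union_right _ hmem)⟩ := by
        conv_lhs => rw [h1]
        exact Bv.constr_basis (S := F) g _
      rw [h2, hg]
      simp only [dif_pos hmem]
      exact hinj hmem.choose_spec.1 hv hmem.choose_spec.2
    have hsub : s ⊆ Set.range (a*x - x*a) := by
      intro v hv
      refine ⟨-v, ?_⟩
      simp only [LinearMap.sub_apply, Module.End.mul_apply, map_neg]
      rw [hxv v hv, hxav v hv]
      simp
    have hles : α ≤ LinearMap.rank (a*x - x*a) := by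
      have hlis : LinearIndependent F ((↑) : s → V) := hli.mono Set.subset_union_left
      calc α ≤ #s := hge
      _ = Module.rank F (Submodule.span F s) := (rank_span_set hlis).symm
      _ ≤ Module.rank F (LinearMap.range (a*x - x*a)) := by
          apply Submodule.rank_mono
          rw [Submodule.span_le]
          intro z hz
          rcases hsub hz with ⟨y, hy⟩
          exact LinearMap.mem_range.2 ⟨y, hy⟩
    exact absurd (ha x) (not_lt.2 hles)
  -- Step 2 : Zorn, maximal Q-set
  obtain ⟨s0, hs0⟩ : ∃ m, Maximal (· ∈ {s | Q s}) m := by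
    apply zorn_subset
    intro ch hchS hch
    refine ⟨⋃₀ ch, ?_, fun s hs => Set.subset_sUnion_of_mem hs⟩
    have hun : (⋃₀ ch) ∪ a '' (⋃₀ ch) = ⋃₀ ((fun s => s ∪ a '' s) '' ch) := by
      ext z
      simp only [Set.mem_union, Set.mem_sUnion, Set.mem_image]
      constructor
      · rintro (⟨s, hs, hz⟩ | ⟨y, ⟨s, hs, hy⟩, rfl⟩)
        · exact ⟨s ∪ a '' s, ⟨s, hs, rfl⟩, Or.inl hz⟩
        · exact ⟨s ∪ a '' s, ⟨s, hs, rfl⟩, Or.inr ⟨y, hy, rfl⟩⟩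
      · rintro ⟨_, ⟨s, hs, rfl⟩, (hz | ⟨y, hy, rfl⟩)⟩
        · exact Or.inl ⟨s, hs, hz⟩
        · exact Or.inr ⟨y, ⟨s, hs, hy⟩, rfl⟩
    refine ⟨?_, ?_, ?_⟩
    · rw [hun]
      apply linearIndepOn_sUnion_of_directed
      · rintro _ ⟨s, hs, rfl⟩ _ ⟨s', hs', rfl⟩
        rcases hch.total hs hs' with h | h
        · exact ⟨s' ∪ a '' s', ⟨s', hs', rfl⟩,
            Set.union_subset_union h (Set.image_mono h), le_rfl⟩
        · exact ⟨s ∪ a '' s, ⟨s, hs, rfl⟩, le_rfl,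
            Set.union_subset_union h (Set.image_mono h)⟩
      · rintro _ ⟨s, hs, rfl⟩
        exact (hchS hs).1
    · intro y hy z hz hyz
      rcases hy with ⟨sy, hsy, hy⟩
      rcases hz with ⟨sz, hsz, hz⟩
      rcases hch.total hsy hsz with h | h
      · exact (hchS hsz).2.1 (h hy) hz hyz
      · exact (hchS hsy).2.1 hy (h hz) hyz
    · rw [Set.eq_empty_iff_forall_notMem]
      rintro z ⟨⟨sy, hsy, hy⟩, ⟨w, ⟨sz, hsz, hw⟩, rfl⟩⟩
      rcases hch.total hsy hsz with h | h
      · exact Set.eq_empty_iff_forall_notMem.1 (hchS hsz).2.2 (a w) ⟨h hy, ⟨w, hw, rfl⟩⟩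
      · exact Set.eq_empty_iff_forall_notMem.1 (hchS hsy).2.2 (a w) ⟨hy, ⟨w, h hw, rfl⟩⟩
  have hQs0 : Q s0 := hs0.1
  set X : Set V := s0 ∪ a '' s0 with hX
  set W : Submodule F V := Submodule.span F X with hW
  have hWrank : Module.rank F W < α := by
    have h1 : Module.rank F W ≤ #X := rank_span_le X
    have h2 : #X ≤ #s0 + #s0 :=
      le_trans (Cardinal.mk_union_le _ _) (by
        exact add_le_add le_rfl Cardinal.mk_image_le)
    exact lt_of_le_of_lt (h1.trans h2) (Cardinal.add_lt_of_lt hα (hbig s0 hQs0) (hbig s0 hQs0))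
  -- Step 3 : almost-eigenvector property
  have claim : ∀ v : V, v ∉ W → ∃ μ : F, a v - μ • v ∈ W := by
    intro v hvW
    by_contra hno
    push_neg at hno
    have hav : a v ∉ W := by
      have := hno 0; simpa using this
    have h1 : a v ∉ Submodule.span F (insert v X) := by
      intro h
      rcases Submodule.mem_span_insert.1 h with ⟨μ, z, hz, he⟩
      exact hno μ (by rw [he]; simpa using hz)
    have h2 : v ∉ Submodule.span F (insert (a v) X) := by
      intro h
      rcases Submodule.mem_span_insert.1 h with ⟨μ, z, hz, he⟩
      by_cases hμ : μ = 0
      · exact hvW (by rw [he, hμ]; simpa using hz)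
      · apply hno μ⁻¹
        have h3 : μ • a v = v - z := by
          conv_rhs => rw [he]
          abel
        have h4 := congrArg (fun t => μ⁻¹ • t) h3
        simp only [smul_smul, inv_mul_cancel₀ hμ, one_smul, smul_sub] at h4
        rw [h4]
        have h5 : μ⁻¹ • v - μ⁻¹ • z - μ⁻¹ • v = -(μ⁻¹ • z) := by abel
        rw [h5]
        exact neg_mem (Submodule.smul_mem _ _ hz)
    have hli2 : LinearIndependent F ((↑) : ↥(insert v (insert (a v) X)) → V) := by
      refine LinearIndepOn.id_insert ?_ h2
      refine LinearIndepOn.id_insert hQs0.1 ?_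
      intro h
      exact hno 0 (by simpa using h)
    have hQnew : Q (insert v s0) := by
      have hseteq : (insert v s0) ∪ a '' (insert v s0) = insert v (insert (a v) X) := by
        rw [Set.image_insert_eq, hX]
        ext z; simp only [Set.mem_union, Set.mem_insert_iff]; tauto
      refine ⟨by rw [hseteq]; exact hli2, ?_, ?_⟩
      · intro y hy z hz hyz
        rcases Set.mem_insert_iff.1 hy with hyv | hy' <;>
          rcases Set.mem_insert_iff.1 hz with hzv | hz'
        · rw [hyv, hzv]
        · exfalso
          apply hno 0
          have : a v ∈ W :=
            Submodule.subset_span (Set.mem_union_right _ ⟨z, hz', by rw [← hyz, hyv]⟩)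
          simpa using this
        · exfalso
          apply hno 0
          have : a v ∈ W :=
            Submodule.subset_span (Set.mem_union_right _ ⟨y, hy', by rw [hyz, hzv]⟩)
          simpa using this
        · exact hQs0.2.1 hy' hz' hyz
      · rw [Set.eq_empty_iff_forall_notMem]
        rintro z ⟨hz1, hz2⟩
        rw [Set.image_insert_eq] at hz2
        rcases Set.mem_insert_iff.1 hz1 with rfl | hz1
        · rcases Set.mem_insert_iff.1 hz2 with heq | hz2
          · apply hno 1
            rw [heq.symm]
            simpa using (sub_self (a z) ▸ (by rw [one_smul, heq, sub_self]; exact zero_mem W :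
              a z - (1:F) • z ∈ W))
          · exact hvW (Submodule.subset_span (Set.mem_union_right _ hz2))
        · rcases Set.mem_insert_iff.1 hz2 with heq | hz2
          · apply hno 0
            have : a v ∈ W := heq ▸ Submodule.subset_span (Set.mem_union_left _ hz1)
            simpa using this
          · exact Set.eq_empty_iff_forall_notMem.1 hQs0.2.2 z ⟨hz1, hz2⟩
    have : insert v s0 ⊆ s0 := hs0.2 hQnew (Set.subset_insert _ _)
    exact hvW (Submodule.subset_span (Set.mem_union_left _ (this (Set.mem_insert _ _))))
  -- Step 4 : the quotient has rank ≥ 2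
  set π := W.mkQ with hπ
  have hrankQ : ¬ (Module.rank F (V ⧸ W) ≤ 1) := by
    intro hle
    have hsum := rank_quotient_add_rank_of_divisionRing W
    have : α ≤ Module.rank F (V ⧸ W) + Module.rank F W := hsum ▸ hα'
    have hlt : Module.rank F (V ⧸ W) + Module.rank F W < α :=
      Cardinal.add_lt_of_lt hα (lt_of_le_of_lt hle (Cardinal.one_lt_aleph0.trans_le hα)) hWrank
    exact absurd this (not_le.2 hlt)
  have hpair : ∀ x : V ⧸ W, ∃ y : V, π y ∉ Submodule.span F {x} := by
    intro x
    by_contra hno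
    push_neg at hno
    apply hrankQ
    rw [rank_le_one_iff]
    refine ⟨x, fun z => ?_⟩
    obtain ⟨y, rfl⟩ := W.mkQ_surjective z
    exact Submodule.mem_span_singleton.1 (hno y)
  have hπzero : ∀ v : V, π v = 0 ↔ v ∈ W := fun v => Submodule.Quotient.mk_eq_zero W
  -- Step 5 : uniqueness of almost-eigenvalues
  have keyeq : ∀ v w : V, v ∉ W → w ∉ W →
      (∀ c d : F, c • (π v) + d • (π w) = 0 → c = 0 ∧ d = 0) →
      ∀ μ ν : F, a v - μ • v ∈ W → a w - ν • w ∈ W → μ = ν := by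
    intro v w hv hw hind μ ν hμ hν
    have hvw : v + w ∉ W := by
      intro h
      have : (1:F) • π v + (1:F) • π w = 0 := by
        simp only [one_smul, ← map_add]
        exact (hπzero _).2 h
      exact one_ne_zero (hind 1 1 this).1
    obtain ⟨ρ, hρ⟩ := claim (v + w) hvw
    have hmem : (ρ - μ) • v + (ρ - ν) • w ∈ W := by
      have heq : (ρ - μ) • v + (ρ - ν) • w
          = (a v - μ • v) + (a w - ν • w) - (a (v + w) - ρ • (v + w)) := by
        rw [map_add]; rw [smul_add]; module
      rw [heq]
      exact sub_mem (add_mem hμ hν) hρ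
    have : (ρ - μ) • π v + (ρ - ν) • π w = 0 := by
      rw [← map_smul, ← map_smul, ← map_add]
      exact (hπzero _).2 hmem
    have h := hind _ _ this
    have h1 : ρ = μ := sub_eq_zero.1 h.1
    have h2 : ρ = ν := sub_eq_zero.1 h.2
    exact h1.symm.trans h2
  -- Step 6 : uniform eigenvalue
  obtain ⟨v₀, hv₀'⟩ := hpair 0
  have hv₀ : v₀ ∉ W := by
    intro h
    exact hv₀' (by rw [(hπzero v₀).2 h]; exact zero_mem _)
  have hπv₀ : π v₀ ≠ 0 := fun h => hv₀' (by rw [h]; exact zero_mem _)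
  obtain ⟨lam, hlam⟩ := claim v₀ hv₀
  obtain ⟨w₁, hw₁'⟩ := hpair (π v₀)
  have hw₁ : w₁ ∉ W := by
    intro h
    exact hw₁' (by rw [(hπzero w₁).2 h]; exact zero_mem _)
  have hπw₁ : π w₁ ≠ 0 := by
    intro h
    exact hw₁' (by rw [h]; exact zero_mem _)
  have hindw₁v₀ : ∀ c d : F, c • (π w₁) + d • (π v₀) = 0 → c = 0 ∧ d = 0 := by
    intro c d h
    by_cases hc : c = 0
    · refine ⟨hc, ?_⟩
      rw [hc, zero_smul, zero_add] at h
      rcases smul_eq_zero.1 h with h | h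
      · exact h
      · exact absurd h hπv₀
    · exfalso
      apply hw₁'
      rw [Submodule.mem_span_singleton]
      refine ⟨-(c⁻¹ * d), ?_⟩
      have : c • π w₁ = -(d • π v₀) := by rw [← eq_neg_iff_add_eq_zero] at h; exact h
      rw [neg_smul, mul_smul, ← smul_neg, ← this, smul_smul, inv_mul_cancel₀ hc, one_smul]
  obtain ⟨μ₁, hμ₁⟩ := claim w₁ hw₁
  have hμ₁lam : μ₁ = lam := keyeq w₁ v₀ hw₁ hv₀ hindw₁v₀ μ₁ lam hμ₁ hlam
  have hall : ∀ v, v ∉ W → a v - lam • v ∈ W := by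
    intro v hv
    obtain ⟨μ, hμ⟩ := claim v hv
    have hπv : π v ≠ 0 := fun h => hv ((hπzero v).1 h)
    by_cases hcase : π v ∈ Submodule.span F {π v₀}
    · -- v proportional to v₀ mod W ; compare with w₁
      obtain ⟨e, he⟩ := Submodule.mem_span_singleton.1 hcase
      have he0 : e ≠ 0 := by
        intro h; rw [h, zero_smul] at he; exact hπv he.symm
      have hind : ∀ c d : F, c • (π v) + d • (π w₁) = 0 → c = 0 ∧ d = 0 := by
        intro c d h
        rw [← he, smul_smul] at h
        rw [add_comm] at h
        have := hindw₁v₀ d (c * e) h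
        refine ⟨?_, this.1⟩
        rcases mul_eq_zero.1 this.2 with h' | h'
        · exact h'
        · exact absurd h' he0
      have heqμ := keyeq v w₁ hv hw₁ hind μ μ₁ hμ hμ₁
      rw [heqμ, hμ₁lam] at hμ
      exact hμ
    · have hind : ∀ c d : F, c • (π v) + d • (π v₀) = 0 → c = 0 ∧ d = 0 := by
        intro c d h
        by_cases hc : c = 0
        · refine ⟨hc, ?_⟩
          rw [hc, zero_smul, zero_add] at h
          rcases smul_eq_zero.1 h with h | h
          · exact h
          · exact absurd h hπv₀
        · exfalso
          apply hcase
          rw [Submodule.mem_span_singleton]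
          refine ⟨-(c⁻¹ * d), ?_⟩
          have : c • π v = -(d • π v₀) := by rw [← eq_neg_iff_add_eq_zero] at h; exact h
          rw [neg_smul, mul_smul, ← smul_neg, ← this, smul_smul, inv_mul_cancel₀ hc, one_smul]
      have := keyeq v v₀ hv hv₀ hind μ lam hμ hlam
      rw [← this]
      exact hμ
  -- Step 7 : conclude
  refine ⟨lam, ?_⟩
  set r : Module.End F V := a - lam • 1 with hr
  have hrv : ∀ v : V, r v = a v - lam • v := by
    intro v
    simp [hr, LinearMap.sub_apply, LinearMap.smul_apply, Module.End.one_apply]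
  have hrW : ∀ v : V, r v ∈ W := by
    intro v
    by_cases hv : v ∈ W
    · have h1 : v + v₀ ∉ W := fun h => hv₀ (by simpa using sub_mem h hv)
      have : r v = r (v + v₀) - r v₀ := by rw [map_add]; abel
      rw [this]
      exact sub_mem (by rw [hrv]; exact hall _ h1) (by rw [hrv]; exact hall _ hv₀)
    · rw [hrv]; exact hall v hv
  have : LinearMap.range r ≤ W := by
    rintro z ⟨y, rfl⟩
    exact hrW y
  exact lt_of_le_of_lt (Submodule.rank_mono this) hWrank

end AuxLemmas

/-- If `U` is a Lie ideal of `gl(V)` whose generated associative ideal of commutators equals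
`I_α`, then `[I_α, End F V] ⊆ U ⊆ F·Id + I_α`. -/
theorem lie_ideal_sandwich (h2 : (2 : F) ≠ 0) (hV : ℵ₀ ≤ Module.rank F V)
    (α : Cardinal) (hα : ℵ₀ ≤ α) (hα' : α ≤ Module.rank F V)
    (U : Submodule F (Module.End F V))
    (hU : ∀ u ∈ U, ∀ a : Module.End F V, u * a - a * u ∈ U)
    (hid : (TwoSidedIdeal.span {y : Module.End F V | ∃ u ∈ U, ∃ u' ∈ U, y = u * u' - u' * u} :
        Set (Module.End F V)) = {φ : Module.End F V | LinearMap.rank φ < α}) :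
    Submodule.span F {x : Module.End F V | ∃ φ ψ : Module.End F V,
        LinearMap.rank φ < α ∧ x = φ * ψ - ψ * φ} ≤ U ∧
      U ≤ Submodule.span F {(1 : Module.End F V)} ⊔ rankIdeal F V α hα := by
  classical
  set gens : Set (Module.End F V) :=
    {y : Module.End F V | ∃ u ∈ U, ∃ u' ∈ U, y = u * u' - u' * u} with hgens
  constructor
  · -- first inclusion : [I_α, End F V] ⊆ U
    rw [Submodule.span_le]
    rintro x ⟨φ, ψ, hφ, rfl⟩
    have hφ' : φ ∈ (TwoSidedIdeal.span gens : Set (Module.End F V)) := by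
      rw [hgens, hid]; exact hφ
    set M : TwoSidedIdeal (Module.End F V) := TwoSidedIdeal.mk'
      {m : Module.End F V | ∀ x y z : Module.End F V, (x*m*y)*z - z*(x*m*y) ∈ U}
      (by intro x y z; simpa using U.zero_mem)
      (by intro m m' hm hm' x y z
          have h := U.add_mem (hm x y z) (hm' x y z)
          convert h using 1
          noncomm_ring)
      (by intro m hm x y z
          have h := U.neg_mem (hm x y z)
          convert h using 1
          noncomm_ring)
      (by intro p m hm x y z
          simpa [mul_assoc] using hm (x*p) y z)
      (by intro m q hm x y z
          simpa [mul_assoc] using hm x (q*y) z) with hM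
    have hgenM : gens ⊆ (M : Set (Module.End F V)) := by
      rintro g ⟨w, hw, w', hw', rfl⟩
      rw [hM, SetLike.mem_coe, TwoSidedIdeal.mem_mk']
      intro x y z
      exact herstein_key hU hw hw' x y z
    have hφM : φ ∈ M := TwoSidedIdeal.mem_span_iff.1 (SetLike.mem_coe.1 hφ') M hgenM
    rw [hM, TwoSidedIdeal.mem_mk'] at hφM
    have := hφM 1 1 ψ
    simpa using this
  · -- second inclusion : U ⊆ F·1 + I_α
    intro u hu
    have hcomm : ∀ w ∈ U, ∀ w' ∈ U, LinearMap.rank (w*w' - w'*w) < α := by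
      intro w hw w' hw'
      have hmem : (w*w' - w'*w) ∈ (TwoSidedIdeal.span gens : Set (Module.End F V)) :=
        TwoSidedIdeal.subset_span ⟨w, hw, w', hw', rfl⟩
      rw [hgens, hid] at hmem
      exact hmem
    have hδ : ∀ x : Module.End F V, (u*x - x*u) ∈ U := hU u hu
    have hδ2 : ∀ x : Module.End F V,
        LinearMap.rank (u*(u*x - x*u) - (u*x - x*u)*u) < α :=
      fun x => hcomm u hu _ (hδ x)
    have hprod : ∀ x y : Module.End F V,
        LinearMap.rank ((u*x - x*u) * (u*y - y*u)) < α := by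
      intro x y
      have hid2 : (u*x - x*u)*(u*y - y*u) + (u*x - x*u)*(u*y - y*u) =
          (u*(u*(x*y) - (x*y)*u) - (u*(x*y) - (x*y)*u)*u)
          - (u*(u*x - x*u) - (u*x - x*u)*u)*y
          - x*(u*(u*y - y*u) - (u*y - y*u)*u) := by noncomm_ring
      have hmem : (u*x - x*u)*(u*y - y*u) + (u*x - x*u)*(u*y - y*u)
          ∈ rankIdeal F V α hα := by
        rw [hid2]
        refine sub_mem (sub_mem ?_ ?_) ?_
        · exact hδ2 (x*y)
        · exact lt_of_le_of_lt (LinearMap.rank_comp_le_left y _) (hδ2 x)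
        · exact lt_of_le_of_lt (LinearMap.rank_comp_le_right _ x) (hδ2 y)
      have heq : (u*x - x*u)*(u*y - y*u) =
          (2:F)⁻¹ • ((u*x - x*u)*(u*y - y*u) + (u*x - x*u)*(u*y - y*u)) := by
        rw [← two_smul F, smul_smul, inv_mul_cancel₀ h2, one_smul]
      have := (rankIdeal F V α hα).smul_mem ((2:F)⁻¹) hmem
      rw [← heq] at this
      exact this
    have hmid : ∀ x b : Module.End F V,
        LinearMap.rank ((u*x - x*u) * b * (u*x - x*u)) < α := by
      intro x b
      have hid3 : (u*x - x*u) * b * (u*x - x*u) =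
          (u*x - x*u)*(u*(b*x) - (b*x)*u) - ((u*x - x*u)*(u*b - b*u))*x := by
        noncomm_ring
      rw [hid3]
      have h1 : LinearMap.rank ((u*x - x*u)*(u*(b*x) - (b*x)*u)) < α := hprod x (b*x)
      have h2' : LinearMap.rank (((u*x - x*u)*(u*b - b*u))*x) < α :=
        lt_of_le_of_lt (LinearMap.rank_comp_le_left x _) (hprod x b)
      exact Submodule.sub_mem (rankIdeal F V α hα) h1 h2'
    have hδsmall : ∀ x : Module.End F V, LinearMap.rank (u*x - x*u) < α :=
      fun x => prime_aux _ (hmid x)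
    obtain ⟨lam, hlam⟩ := central_aux hα hα' u hδsmall
    refine Submodule.mem_sup.2 ⟨lam • 1, ?_, u - lam • 1, hlam, ?_⟩
    · exact Submodule.smul_mem _ _ (Submodule.mem_span_singleton_self 1)
    · rw [add_sub_cancel]
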